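/- Let P(T) ∈ K[T] be a nonconstant polynomial over a number field K with ring of integers A. Then there exist infinitely many nonzero primes 𝔭 of A that are 'prime divisors' of P, i.e., for which there exists t₀ ∈ K with P(t₀) ∈ 𝔭 A_𝔭 (lying in the maximal ideal of the localization). -/

import Mathlib

open Polynomial Filter NumberField

noncomputable def Complex.abs : AbsoluteValue ℂ ℝ := IsAbsoluteValue.toAbsoluteValue (norm : ℂ → ℝ)

theorem Complex.abs_apply (z : ℂ) : Complex.abs z = ‖z‖ := rfl

theorem Complex.abs_ofReal (r : ℝ) : Complex.abs (r : ℂ) = |r| := by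
  rw [Complex.abs_apply, Complex.norm_real, Real.norm_eq_abs]

@[simp] theorem Complex.abs_natCast (n : ℕ) : Complex.abs (n : ℂ) = n := by
  rw [Complex.abs_apply, Complex.norm_natCast]

theorem aux_key (K : Type*) [Field K] [NumberField K]
    (P : Polynomial K) (hP : 0 < P.natDegree)
    (n : NumberField.RingOfIntegers K) (hn : n ≠ 0) :
    ∃ 𝔭 : Ideal (NumberField.RingOfIntegers K), 𝔭 ≠ ⊥ ∧ 𝔭.IsPrime ∧
      (∃ (t₀ : K) (x s : NumberField.RingOfIntegers K), x ∈ 𝔭 ∧ s ∉ 𝔭 ∧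
        P.eval t₀ * algebraMap (NumberField.RingOfIntegers K) K s =
          algebraMap (NumberField.RingOfIntegers K) K x) ∧ n ∉ 𝔭 := by
  let f : 𝓞 K →+* K := algebraMap (𝓞 K) K
  have hfinj : Function.Injective f := IsFractionRing.injective (𝓞 K) K
  have hP0 : P ≠ 0 := fun h => by simp [h] at hP
  -- clear denominators
  set Q : (𝓞 K)[X] := IsLocalization.integerNormalization (nonZeroDivisors (𝓞 K)) P with hQdef
  obtain ⟨b, hb⟩ := IsLocalization.integerNormalization_map_to_map (nonZeroDivisors (𝓞 K)) P
  rw [← hQdef] at hb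
  have hb0 : (b : 𝓞 K) ≠ 0 := nonZeroDivisors.coe_ne_zero b
  have hfb0 : f (b : 𝓞 K) ≠ 0 := fun h => hb0 (hfinj (by simpa using h))
  have hbsmul : Q.map f = C (f (b : 𝓞 K)) * P := by
    rw [hb]; ext i; simp [Polynomial.coeff_C_mul, Polynomial.coeff_smul, Algebra.smul_def, f]
  have hQ0 : Q ≠ 0 := by
    rw [hQdef, Ne, IsFractionRing.integerNormalization_eq_zero_iff]; exact hP0
  have hQdeg : 0 < Q.degree := by
    rw [← natDegree_pos_iff_degree_pos]
    have h1 : (Q.map f).natDegree = Q.natDegree := natDegree_map_eq_of_injective hfinj Q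
    rw [← h1, hbsmul, natDegree_C_mul hfb0]; exact hP
  -- a point where Q doesn't vanish
  obtain ⟨a, ha⟩ : ∃ a : 𝓞 K, Q.eval a ≠ 0 := by
    have hfin : Set.Finite {x : 𝓞 K | Q.IsRoot x} := Q.finite_setOf_isRoot hQ0
    obtain ⟨a, ha⟩ := hfin.infinite_compl.nonempty
    exact ⟨a, ha⟩
  set d : 𝓞 K := Q.eval a with hd
  set m : 𝓞 K := (b : 𝓞 K) * n with hm
  have hm0 : m ≠ 0 := mul_ne_zero hb0 hn
  have hdm0 : d * m ≠ 0 := mul_ne_zero ha hm0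
  -- norms grow
  set C : ℝ := |(Algebra.norm ℚ (f d) : ℝ)| + 1 with hC
  have hC1 : 1 ≤ C := by rw [hC]; linarith [abs_nonneg ((Algebra.norm ℚ (f d) : ℝ))]
  have key : ∃ t : ℕ, ∀ σ : K →ₐ[ℚ] ℂ,
      C ≤ Complex.abs (σ (f (Q.eval (a + d * m * t)))) := by
    have ev : ∀ᶠ t : ℕ in atTop, ∀ σ : K →ₐ[ℚ] ℂ,
        C ≤ Complex.abs (σ (f (Q.eval (a + d * m * t)))) := by
      rw [Filter.eventually_all]
      intro σ
      set ψ : 𝓞 K →+* ℂ := (σ : K →+* ℂ).comp f with hψdef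
      have hψinj : Function.Injective ψ := (σ : K →+* ℂ).injective.comp hfinj
      have hlead : ψ Q.leadingCoeff ≠ 0 := by
        intro h
        exact (leadingCoeff_ne_zero.2 hQ0) (hψinj (by simpa using h))
      have hψdm : ψ (d * m) ≠ 0 := fun h => hdm0 (hψinj (by simpa using h))
      have hz : Tendsto (fun t : ℕ => Complex.abs (ψ (a + d * m * t))) atTop atTop := by
        have heq : ∀ t : ℕ, ψ (a + d * m * t) = ψ a + ψ (d * m) * t := by
          intro t; simp [map_add, map_mul, map_natCast]
        have h2 : Tendsto (fun t : ℕ => Complex.abs (ψ (d * m)) * t - Complex.abs (ψ a))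
            atTop atTop := by
          apply tendsto_atTop_add_const_right
          exact Tendsto.const_mul_atTop (Complex.abs.pos hψdm) tendsto_natCast_atTop_atTop
        apply tendsto_atTop_mono _ h2
        intro t
        rw [heq t]
        have h3 := Complex.abs.add_le (ψ a + ψ (d * m) * t) (-(ψ a))
        have h4 : Complex.abs (ψ (d * m) * ↑t) = Complex.abs (ψ (d * m)) * t := by
          simp [map_mul]
        have h5 : ψ a + ψ (d * m) * ↑t + -ψ a = ψ (d * m) * ↑t := by ring
        rw [h5, Complex.abs.map_neg] at h3
        rw [h4] at h3
        linarith [h3]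
      have htend := Polynomial.tendsto_abv_eval₂_atTop ψ Complex.abs Q hQdeg hlead hz
      have hrw : ∀ t : ℕ, Q.eval₂ ψ (ψ (a + d * m * t)) = ψ (Q.eval (a + d * m * t)) := by
        intro t; exact Polynomial.eval₂_at_apply ψ _
      have htend' : Tendsto (fun t : ℕ => Complex.abs (ψ (Q.eval (a + d * m * t))))
          atTop atTop := by
        refine htend.congr fun t => by rw [hrw t]
      filter_upwards [htend'.eventually_ge_atTop C] with t ht
      exact ht
    exact ev.exists
  obtain ⟨t, ht⟩ := key
  set ξ : 𝓞 K := a + d * m * t with hξ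
  set y : 𝓞 K := Q.eval ξ with hy
  -- norm bound
  have hnormy : |(Algebra.norm ℚ (f y) : ℝ)| > |(Algebra.norm ℚ (f d) : ℝ)| := by
    have hemb := Algebra.norm_eq_prod_embeddings ℚ ℂ (f y)
    have habs : |(Algebra.norm ℚ (f y) : ℝ)| = ∏ σ : K →ₐ[ℚ] ℂ, Complex.abs (σ (f y)) := by
      have h0 := congrArg Complex.abs hemb
      rwa [map_prod, eq_ratCast, ← Complex.ofReal_ratCast, Complex.abs_ofReal] at h0
    have hcard : 0 < Fintype.card (K →ₐ[ℚ] ℂ) := by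
      rw [AlgHom.card]; exact Module.finrank_pos
    have hge : C ^ Fintype.card (K →ₐ[ℚ] ℂ) ≤ ∏ σ : K →ₐ[ℚ] ℂ, Complex.abs (σ (f y)) := by
      rw [← Finset.card_univ, ← Finset.prod_const]
      exact Finset.prod_le_prod (fun _ _ => by positivity) (fun σ _ => ht σ)
    have hCpow : C ≤ C ^ Fintype.card (K →ₐ[ℚ] ℂ) := le_self_pow₀ hC1 hcard.ne'
    rw [habs]
    calc |(Algebra.norm ℚ (f d) : ℝ)| < C := by rw [hC]; linarith
    _ ≤ C ^ Fintype.card (K →ₐ[ℚ] ℂ) := hCpow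
    _ ≤ _ := hge
  -- factor y = d * w
  have hdvd : d * m ∣ y - d := by
    have h1 : ξ - a ∣ Q.eval ξ - Q.eval a := sub_dvd_eval_sub ξ a Q
    have h2 : ξ - a = d * m * t := by rw [hξ]; ring
    exact dvd_trans (Dvd.intro t rfl) (h2 ▸ h1)
  obtain ⟨u, hu⟩ := hdvd
  set w : 𝓞 K := 1 + m * u with hw
  have hyw : y = d * w := by rw [hw]; linear_combination hu
  have hwu : ¬ IsUnit w := by
    intro hunit
    have h1 : IsUnit (Algebra.norm ℤ w) := hunit.map (Algebra.norm ℤ)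
    have h2 : |(Algebra.norm ℚ (f w) : ℝ)| = 1 := by
      rw [← Algebra.coe_norm_int]
      rcases Int.isUnit_iff.mp h1 with h | h <;> rw [h] <;> norm_num
    have h3 : (Algebra.norm ℚ (f y) : ℝ)
        = (Algebra.norm ℚ (f d) : ℝ) * (Algebra.norm ℚ (f w) : ℝ) := by
      rw [hyw]; push_cast [map_mul]; ring
    have h4 : |(Algebra.norm ℚ (f y) : ℝ)| = |(Algebra.norm ℚ (f d) : ℝ)| := by
      rw [h3, abs_mul, h2, mul_one]
    linarith [hnormy, h4.le, h4.ge]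
  have hy0 : y ≠ 0 := by
    intro h0
    rw [h0] at hnormy
    simp only [map_zero, Algebra.norm_zero, Rat.cast_zero, abs_zero] at hnormy
    linarith [abs_nonneg ((Algebra.norm ℚ (f d) : ℝ))]
  have hw0 : w ≠ 0 := fun h0 => hy0 (by rw [hyw, h0, mul_zero])
  obtain ⟨𝔭, h𝔭max, h𝔭le⟩ := Ideal.exists_le_maximal _ (Ideal.span_singleton_ne_top hwu)
  have hw𝔭 : w ∈ 𝔭 := h𝔭le (Ideal.mem_span_singleton_self w)
  refine ⟨𝔭, ?_, h𝔭max.isPrime, ⟨f ξ, y, b, ?_, ?_, ?_⟩, ?_⟩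
  · intro h; rw [h] at hw𝔭; exact hw0 (Ideal.mem_bot.mp hw𝔭)
  · rw [hyw]; exact Ideal.mul_mem_left _ d hw𝔭
  · intro hb𝔭
    have h1 : (1 : 𝓞 K) ∈ 𝔭 := by
      have hmu : m * u ∈ 𝔭 := Ideal.mul_mem_right _ _ (Ideal.mul_mem_right _ _ hb𝔭)
      have h2 : w - m * u ∈ 𝔭 := Ideal.sub_mem _ hw𝔭 hmu
      simpa [hw] using h2
    exact h𝔭max.ne_top (Ideal.eq_top_of_isUnit_mem _ h1 isUnit_one)
  · have heq : f y = P.eval (f ξ) * f (b : 𝓞 K) := by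
      rw [hy, ← Polynomial.eval₂_at_apply f ξ (p := Q), ← Polynomial.eval_map, hbsmul]
      simp [mul_comm]
    rw [heq]
  · intro hn𝔭
    have h1 : (1 : 𝓞 K) ∈ 𝔭 := by
      have hmu : m * u ∈ 𝔭 := Ideal.mul_mem_right _ _ (Ideal.mul_mem_left _ _ hn𝔭)
      have h2 : w - m * u ∈ 𝔭 := Ideal.sub_mem _ hw𝔭 hmu
      simpa [hw] using h2
    exact h𝔭max.ne_top (Ideal.eq_top_of_isUnit_mem _ h1 isUnit_one)

theorem stmt17 (K : Type*) [Field K] [NumberField K]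
    (P : Polynomial K) (hP : 0 < P.natDegree) :
    {𝔭 : Ideal (NumberField.RingOfIntegers K) | 𝔭 ≠ ⊥ ∧ 𝔭.IsPrime ∧
      ∃ (t₀ : K) (x s : NumberField.RingOfIntegers K), x ∈ 𝔭 ∧ s ∉ 𝔭 ∧
        P.eval t₀ * algebraMap (NumberField.RingOfIntegers K) K s =
          algebraMap (NumberField.RingOfIntegers K) K x}.Infinite := by
  classical
  intro hfin
  have hex : ∀ 𝔭 : Ideal (NumberField.RingOfIntegers K),
      ∃ x : NumberField.RingOfIntegers K, x ≠ 0 ∧ (𝔭 ≠ ⊥ → x ∈ 𝔭) := by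
    intro 𝔭
    by_cases h : 𝔭 = ⊥
    · exact ⟨1, one_ne_zero, fun h' => absurd h h'⟩
    · obtain ⟨x, hx, hx0⟩ := Submodule.exists_mem_ne_zero_of_ne_bot h
      exact ⟨x, hx0, fun _ => hx⟩
  choose e he0 hemem using hex
  have hn0 : (∏ 𝔭 ∈ hfin.toFinset, e 𝔭) ≠ 0 :=
    Finset.prod_ne_zero_iff.2 fun 𝔭 _ => he0 𝔭
  obtain ⟨𝔭, h1, h2, h3, h4⟩ := aux_key K P hP _ hn0
  have hmem : 𝔭 ∈ hfin.toFinset := hfin.mem_toFinset.2 ⟨h1, h2, h3⟩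
  apply h4
  obtain ⟨c, hc⟩ := Finset.dvd_prod_of_mem e hmem
  rw [hc]
  exact Ideal.mul_mem_right _ _ (hemem 𝔭 h1)
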